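/- Let V, W be finite-dimensional complex vector spaces and η : W → End(V) linear with commuting image and with η(w) nilpotent for every w ∈ W. Suppose moreover there is a Hermitian inner product on V and on W such that the induced bilinear map satisfies Σ_k η(e_k)·η(e_k)* = Σ_k η(e_k)*·η(e_k) for an orthonormal basis (e_k) of W (i.e., the 'θ∧θ* = 0' condition in the commuting, nilpotent case implies): then η = 0. -/

import Mathlib

private lemma aux_symm_sq_zero {V : Type*} [NormedAddCommGroup V] [InnerProductSpace ℂ V]
    [FiniteDimensional ℂ V] (B : V →ₗ[ℂ] V) (hB : B.IsSymmetric) (h : B * B = 0) : B = 0 := by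
  ext x
  have h2 : B (B x) = 0 := by simpa [Module.End.mul_apply] using congrArg (fun f => f x) h
  have : (inner ℂ (B x) (B x) : ℂ) = 0 := by rw [← hB (B x) x, h2]; simp
  simpa using inner_self_eq_zero.mp this

private lemma aux_symm_nilpotent_zero {V : Type*} [NormedAddCommGroup V]
    [InnerProductSpace ℂ V] [FiniteDimensional ℂ V] :
    ∀ n : ℕ, ∀ B : V →ₗ[ℂ] V, B.IsSymmetric → B ^ n = 0 → B = 0 := by
  intro n
  induction n using Nat.strong_induction_on with
  | _ n ih =>
    intro B hB hn
    match n with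
    | 0 =>
      ext x
      have h1 : (1 : V →ₗ[ℂ] V) = 0 := by simpa using hn
      have hx : x = 0 := by simpa using congrArg (fun f => f x) h1
      simp [hx]
    | 1 => simpa using hn
    | (m+2) =>
      have hsymm : (B ^ (m+1)).IsSymmetric := hB.pow (m+1)
      have hsq : (B ^ (m+1)) * (B ^ (m+1)) = 0 := by
        have he : B ^ (m+1) * B ^ (m+1) = B ^ (m+2) * B ^ m := by
          rw [← pow_add, ← pow_add]; congr 1; omega
        rw [he, hn, zero_mul]
      exact ih (m+1) (by omega) B hB (aux_symm_sq_zero _ hsymm hsq)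

private lemma aux_normal_nilpotent_zero {V : Type*} [NormedAddCommGroup V]
    [InnerProductSpace ℂ V] [FiniteDimensional ℂ V] (A : V →ₗ[ℂ] V)
    (hnorm : A * LinearMap.adjoint A = LinearMap.adjoint A * A)
    (hnil : IsNilpotent A) : A = 0 := by
  obtain ⟨n, hn⟩ := hnil
  have hc : Commute (LinearMap.adjoint A) A := hnorm.symm
  have hBnil : (LinearMap.adjoint A * A) ^ n = 0 := by
    rw [hc.mul_pow, hn, mul_zero]
  have hB0 : LinearMap.adjoint A * A = 0 :=
    aux_symm_nilpotent_zero n _ (LinearMap.isSymmetric_adjoint_mul_self A) hBnil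
  ext x
  have h2 : LinearMap.adjoint A (A x) = 0 := by
    simpa [Module.End.mul_apply] using congrArg (fun f => f x) hB0
  have h1 : (inner ℂ (A x) (A x) : ℂ) = 0 := by
    rw [← LinearMap.adjoint_inner_left, h2]; simp
  simpa using inner_self_eq_zero.mp h1

/-- Pointwise form of Proposition 2.7: if `η : W → End V` is linear with
pairwise commuting image, every `η w` is nilpotent, and
`η w ∘ (η w')* = (η w')* ∘ η w` for all `w, w'` (the pointwise `θ ∧ θ* = 0`
condition), then `η = 0`. -/
theorem stmt_10 (V W : Type*) [NormedAddCommGroup V] [InnerProductSpace ℂ V]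
    [FiniteDimensional ℂ V] [AddCommGroup W] [Module ℂ W] [FiniteDimensional ℂ W]
    (η : W →ₗ[ℂ] (V →ₗ[ℂ] V))
    (hcomm : ∀ w w', η w ∘ₗ η w' = η w' ∘ₗ η w)
    (hnil : ∀ w, IsNilpotent (η w))
    (hstar : ∀ w w', η w ∘ₗ LinearMap.adjoint (η w') = LinearMap.adjoint (η w') ∘ₗ η w) :
    η = 0 := by
  have key : ∀ w, η w = 0 := fun w =>
    aux_normal_nilpotent_zero (η w) (hstar w w) (hnil w)
  ext w x
  simp [key w]
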